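/- Let aₙ → a₀ uniformly on ℝ^m, where a₀ is continuous with unique global minimizer θ*, and let θ̂ₙ be a minimizer of aₙ with θ̂ₙ → θ*. Then for every δ > 0, limsupₙ sup{aₙ(θ̂ₙ) - aₙ(θ) : ‖θ - θ̂ₙ‖ ≥ δ} ≤ sup{a₀(θ*) - a₀(θ) : ‖θ - θ*‖ ≥ δ/2}, which is strictly negative when a₀ is strictly convex. -/

import Mathlib

open Filter

/-- Condition (iii') for Laplace's method: if `aₙ → a₀` uniformly, `a₀` is continuous and
strictly convex with unique global minimizer `θ*`, and the minimizers `θ̂ₙ` of `aₙ` converge to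
`θ*`, then for every `δ > 0` the limsup of `sup{aₙ(θ̂ₙ) - aₙ(θ) : ‖θ - θ̂ₙ‖ ≥ δ}` is at most
`sup{a₀(θ*) - a₀(θ) : ‖θ - θ*‖ ≥ δ/2}`, which is strictly negative. -/
theorem stmt11 {m : ℕ} (hm : 0 < m) (a : ℕ → EuclideanSpace ℝ (Fin m) → ℝ)
    (a₀ : EuclideanSpace ℝ (Fin m) → ℝ)
    (hacont : ∀ n, Continuous (a n)) (hcont : Continuous a₀)
    (hunif : TendstoUniformly a a₀ atTop)
    (hconv : StrictConvexOn ℝ Set.univ a₀)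
    (θs : EuclideanSpace ℝ (Fin m)) (hmin : ∀ θ, θ ≠ θs → a₀ θs < a₀ θ)
    (θhat : ℕ → EuclideanSpace ℝ (Fin m))
    (hargmin : ∀ n, ∀ θ, a n (θhat n) ≤ a n θ)
    (hconsist : Tendsto θhat atTop (nhds θs))
    (δ : ℝ) (hδ : 0 < δ) :
    limsup (fun n => sSup ((fun θ => a n (θhat n) - a n θ) ''
        {θ | δ ≤ ‖θ - θhat n‖})) atTop ≤
      sSup ((fun θ => a₀ θs - a₀ θ) '' {θ | δ / 2 ≤ ‖θ - θs‖}) ∧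
    sSup ((fun θ => a₀ θs - a₀ θ) '' {θ | δ / 2 ≤ ‖θ - θs‖}) < 0 := by
  have i : Fin m := ⟨0, hm⟩
  have hδ2 : (0:ℝ) < δ / 2 := half_pos hδ
  set S := sSup ((fun θ => a₀ θs - a₀ θ) '' {θ | δ / 2 ≤ ‖θ - θs‖}) with hSdef
  have hmin' : ∀ θ, a₀ θs ≤ a₀ θ := by
    intro θ
    by_cases h : θ = θs
    · simp [h]
    · exact (hmin θ h).le
  -- a point on the sphere of radius δ/2
  have hvmem : θs + EuclideanSpace.single i (δ/2) ∈ Metric.sphere θs (δ/2) := by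
    simp [Metric.mem_sphere, dist_eq_norm, add_sub_cancel_left,
      EuclideanSpace.norm_single, abs_of_pos hδ2, abs_of_pos hδ]
  have hsph_ne : (Metric.sphere θs (δ/2)).Nonempty := ⟨_, hvmem⟩
  obtain ⟨θ₀, hθ₀mem, hθ₀min⟩ :=
    (isCompact_sphere θs (δ/2)).exists_isMinOn hsph_ne hcont.continuousOn
  set ε := a₀ θ₀ - a₀ θs with hεdef
  have hθ₀ne : θ₀ ≠ θs := by
    intro h
    rw [Metric.mem_sphere, h, dist_self] at hθ₀mem
    linarith
  have hε : 0 < ε := by have := hmin θ₀ hθ₀ne; simp [hεdef]; linarith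
  -- key pointwise bound outside the δ/2 ball
  have hkey : ∀ θ, δ/2 ≤ ‖θ - θs‖ → a₀ θs - a₀ θ ≤ -ε := by
    intro θ hθ
    have hr : 0 < ‖θ - θs‖ := lt_of_lt_of_le hδ2 hθ
    set t := (δ/2) / ‖θ - θs‖ with htdef
    have ht0 : 0 < t := div_pos hδ2 hr
    have ht1 : t ≤ 1 := (div_le_one hr).2 hθ
    have hmem : θs + t • (θ - θs) ∈ Metric.sphere θs (δ/2) := by
      simp only [Metric.mem_sphere, dist_eq_norm, add_sub_cancel_left, norm_smul,
        Real.norm_eq_abs, abs_of_pos ht0, htdef]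
      field_simp
      ring_nf
      rw [abs_of_pos (by positivity : (0:ℝ) < δ * ‖θ - θs‖⁻¹ * (1 / 2))]
      field_simp
    have hconvex := hconv.convexOn.2 (Set.mem_univ θs) (Set.mem_univ θ)
      (by linarith : (0:ℝ) ≤ 1 - t) ht0.le (by ring)
    have heq : (1 - t) • θs + t • θ = θs + t • (θ - θs) := by
      rw [smul_sub, sub_smul, one_smul]
      abel
    rw [heq] at hconvex
    have h1 : a₀ θ₀ ≤ (1 - t) * a₀ θs + t * a₀ θ := le_trans (hθ₀min hmem) hconvex
    have h2 : a₀ θs ≤ a₀ θ := hmin' θ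
    nlinarith [mul_le_of_le_one_left hε.le ht1]
  have hSbdd : BddAbove ((fun θ => a₀ θs - a₀ θ) '' {θ | δ / 2 ≤ ‖θ - θs‖}) := by
    refine ⟨-ε, ?_⟩
    rintro x ⟨θ, hθ, rfl⟩
    exact hkey θ hθ
  have hSmemθ : θs + EuclideanSpace.single i (δ/2) ∈ {θ | δ / 2 ≤ ‖θ - θs‖} := by
    simp [add_sub_cancel_left, EuclideanSpace.norm_single, abs_of_pos hδ2, abs_of_pos hδ]
  have hSne : ((fun θ => a₀ θs - a₀ θ) '' {θ | δ / 2 ≤ ‖θ - θs‖}).Nonempty :=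
    ⟨_, ⟨_, hSmemθ, rfl⟩⟩
  have hSle : S ≤ -ε := by
    refine csSup_le hSne ?_
    rintro x ⟨θ, hθ, rfl⟩
    exact hkey θ hθ
  refine ⟨?_, lt_of_le_of_lt hSle (by linarith)⟩
  -- the images are nonempty and bounded above
  set w := EuclideanSpace.single i δ with hwdef
  have hw : ‖w‖ = δ := by
    simp [hwdef, EuclideanSpace.norm_single, abs_of_pos hδ]
  have himmem : ∀ n, θhat n + w ∈ {θ | δ ≤ ‖θ - θhat n‖} := by
    intro n
    simp [add_sub_cancel_left, hw]
  have himne : ∀ n, ((fun θ => a n (θhat n) - a n θ) '' {θ | δ ≤ ‖θ - θhat n‖}).Nonempty :=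
    fun n => ⟨_, ⟨_, himmem n, rfl⟩⟩
  have himbdd : ∀ n, BddAbove ((fun θ => a n (θhat n) - a n θ) '' {θ | δ ≤ ‖θ - θhat n‖}) := by
    intro n
    refine ⟨0, ?_⟩
    rintro x ⟨θ, hθ, rfl⟩
    have := hargmin n θ
    show a n (θhat n) - a n θ ≤ 0
    linarith
  -- eventual lower bound on the sSup, for coboundedness
  have hlow : ∀ᶠ n in atTop, a₀ θs - a₀ (θs + w) - 3 ≤
      sSup ((fun θ => a n (θhat n) - a n θ) '' {θ | δ ≤ ‖θ - θhat n‖}) := by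
    have h1 := (Metric.tendstoUniformly_iff.1 hunif) 1 one_pos
    have h2 : Tendsto (fun n => a₀ (θhat n + w)) atTop (nhds (a₀ (θs + w))) :=
      (hcont.tendsto _).comp (hconsist.add_const w)
    have h3 : ∀ᶠ n in atTop, a₀ (θhat n + w) < a₀ (θs + w) + 1 :=
      h2.eventually (Filter.Tendsto.eventually_lt_const (lt_add_one _) tendsto_id)
    filter_upwards [h1, h3] with n hn1 hn3
    have hub : a n (θhat n) - a n (θhat n + w) ≤
        sSup ((fun θ => a n (θhat n) - a n θ) '' {θ | δ ≤ ‖θ - θhat n‖}) :=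
      le_csSup (himbdd n) ⟨_, himmem n, rfl⟩
    have e1 := hn1 (θhat n)
    have e2 := hn1 (θhat n + w)
    rw [Real.dist_eq, abs_lt] at e1 e2
    have e3 := hmin' (θhat n)
    linarith
  have hcob : IsCoboundedUnder (· ≤ ·) atTop
      (fun n => sSup ((fun θ => a n (θhat n) - a n θ) '' {θ | δ ≤ ‖θ - θhat n‖})) :=
    isCoboundedUnder_le_of_eventually_le atTop hlow
  refine le_of_forall_pos_le_add fun η hη => ?_
  refine limsup_le_of_le hcob ?_
  have hu := (Metric.tendstoUniformly_iff.1 hunif) (η/2) (by positivity)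
  have hc : ∀ᶠ n in atTop, ‖θhat n - θs‖ < δ/2 := by
    filter_upwards [hconsist.eventually (Metric.ball_mem_nhds θs hδ2)] with n hn
    rw [dist_eq_norm] at hn
    exact hn
  filter_upwards [hu, hc] with n hn1 hn2
  refine csSup_le (himne n) ?_
  rintro x ⟨θ, hθ, rfl⟩
  have hθ' : δ ≤ ‖θ - θhat n‖ := hθ
  have hd : δ/2 ≤ ‖θ - θs‖ := by
    have h4 : ‖θ - θhat n‖ ≤ ‖θ - θs‖ + ‖θs - θhat n‖ := by
      calc ‖θ - θhat n‖ = ‖(θ - θs) + (θs - θhat n)‖ := by abel_nf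
        _ ≤ ‖θ - θs‖ + ‖θs - θhat n‖ := norm_add_le _ _
    have h5 : ‖θs - θhat n‖ = ‖θhat n - θs‖ := norm_sub_rev _ _
    linarith
  have hSin : a₀ θs - a₀ θ ≤ S := le_csSup hSbdd ⟨θ, hd, rfl⟩
  have e1 := hn1 θs
  have e2 := hn1 θ
  rw [Real.dist_eq, abs_lt] at e1 e2
  have e3 := hargmin n θs
  show a n (θhat n) - a n θ ≤ S + η
  linarith
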